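/- Let T = F(a,b) × F(c,d) be the direct product of two free groups of rank 2, and let S be the subgroup of T generated by a, bc, and d. Then S is a normal subgroup of T, the quotient T/S is infinite cyclic, and S is not finitely presented. In particular, the finitely presented group T is not coherent. -/

import Mathlib

/-- A group is finitely presented if it is the quotient of a finitely generated free group
by the normal closure of a finite set. -/
def Group.IsFinitelyPresented' (A : Type*) [Group A] : Prop :=
  ∃ (n : ℕ) (π : FreeGroup (Fin n) →* A), Function.Surjective π ∧
    ∃ s : Finset (FreeGroup (Fin n)), Subgroup.normalClosure ↑s = π.ker

/-- Stallings' subgroup `S = ⟨a, bc, d⟩` of `T = F(a,b) × F(c,d)`. -/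
def stallingsSubgroup : Subgroup (FreeGroup (Fin 2) × FreeGroup (Fin 2)) :=
  Subgroup.closure {(FreeGroup.of 0, 1), (FreeGroup.of 1, FreeGroup.of 0), (1, FreeGroup.of 1)}

open FreeGroup Subgroup SemidirectProduct
open scoped commutatorElement

namespace StallingsProof

abbrev F2 := FreeGroup (Fin 2)
abbrev FZ := FreeGroup ℤ
abbrev TT := F2 × F2

def a1 : F2 := FreeGroup.of 0
def b1 : F2 := FreeGroup.of 1

/-- shift automorphism of FreeGroup ℤ -/
def σA : MulAut FZ := FreeGroup.freeGroupCongr (Equiv.addRight (1 : ℤ))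

lemma σA_of (i : ℤ) : σA (FreeGroup.of i) = FreeGroup.of (i + 1) := by
  simp [σA]

lemma σA_inv_of (i : ℤ) : σA⁻¹ (FreeGroup.of i) = FreeGroup.of (i - 1) := by
  have h : σA (FreeGroup.of (i - 1)) = FreeGroup.of i := by
    rw [σA_of]; ring_nf
  rw [← h]
  have : (σA⁻¹ * σA) (FreeGroup.of (i-1)) = FreeGroup.of (i-1) := by
    rw [inv_mul_cancel]; rfl
  simpa [MulAut.mul_apply] using this

lemma σA_zpow_of (k i : ℤ) : (σA ^ k) (FreeGroup.of i) = FreeGroup.of (i + k) := by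
  induction k using Int.induction_on generalizing i with
  | zero => simp
  | succ n ih =>
      rw [zpow_add_one, MulAut.mul_apply, σA_of, ih]
      congr 1; ring
  | pred n ih =>
      rw [zpow_sub_one, MulAut.mul_apply, σA_inv_of, ih]
      congr 1; ring

/-- the conjugates map : of i ↦ b^i a b^{-i} -/
def e1 : FZ →* F2 := FreeGroup.lift (fun i : ℤ => b1 ^ i * a1 * b1 ^ (-i))

@[simp] lemma e1_of (i : ℤ) : e1 (FreeGroup.of i) = b1 ^ i * a1 * b1 ^ (-i) :=
  FreeGroup.lift_apply_of

def φ2 : Multiplicative ℤ →* MulAut FZ := zpowersHom _ σA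

abbrev M2 := FZ ⋊[φ2] Multiplicative ℤ

lemma ι2_compat : ∀ g : Multiplicative ℤ,
    e1.comp (φ2 g).toMonoidHom = (MulAut.conj ((zpowersHom F2 b1) g)).toMonoidHom.comp e1 := by
  intro g
  apply FreeGroup.ext_hom
  intro i
  have hφ : (φ2 g) (FreeGroup.of i) = FreeGroup.of (i + g.toAdd) := by
    rw [φ2, zpowersHom_apply, σA_zpow_of]
  simp only [MonoidHom.comp_apply, MulEquiv.coe_toMonoidHom, hφ, e1_of,
    MulAut.conj_apply, zpowersHom_apply]
  group

def ι2 : M2 →* F2 := SemidirectProduct.lift e1 (zpowersHom F2 b1) ι2_compat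

def j2 : F2 →* M2 :=
  FreeGroup.lift ![SemidirectProduct.inl (FreeGroup.of (0:ℤ)),
    SemidirectProduct.inr (Multiplicative.ofAdd 1)]

lemma ι2_j2 : ι2.comp j2 = MonoidHom.id F2 := by
  apply FreeGroup.ext_hom
  intro i
  fin_cases i <;>
    simp [j2, ι2, a1, b1, FreeGroup.lift_apply_of]

lemma j2_ι2 : j2.comp ι2 = MonoidHom.id M2 := by
  apply SemidirectProduct.hom_ext
  · apply FreeGroup.ext_hom
    intro i
    have h1 : (j2.comp ι2).comp SemidirectProduct.inl (FreeGroup.of i)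
        = j2 (b1 ^ i * a1 * b1 ^ (-i)) := by
      simp [ι2]
    rw [h1]
    have hb : j2 b1 = SemidirectProduct.inr (Multiplicative.ofAdd 1) := by
      simp [j2, b1, FreeGroup.lift_apply_of]
    have ha : j2 a1 = SemidirectProduct.inl (FreeGroup.of (0:ℤ)) := by
      simp [j2, a1, FreeGroup.lift_apply_of]
    rw [_root_.map_mul j2, _root_.map_mul j2, _root_.map_zpow j2, _root_.map_zpow j2, hb, ha,
      ← _root_.map_zpow SemidirectProduct.inr]
    have hφ : φ2 ((Multiplicative.ofAdd (1:ℤ)) ^ i) (FreeGroup.of (0:ℤ)) = FreeGroup.of i := by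
      simp [φ2, zpowersHom_apply, σA_zpow_of]
    rw [zpow_neg, ← _root_.map_zpow SemidirectProduct.inr,
      ← _root_.map_inv SemidirectProduct.inr, ← SemidirectProduct.inl_aut, hφ]
    simp
  · apply MonoidHom.ext_mint
    simp [ι2, j2, b1, FreeGroup.lift_apply_of]


lemma ι2_injective : Function.Injective ι2 := by
  intro m m' h
  have h1 := congrArg (fun (h : M2 →* M2) => h m) j2_ι2
  have h2 := congrArg (fun (h : M2 →* M2) => h m') j2_ι2
  simp only [MonoidHom.comp_apply, MonoidHom.id_apply] at h1 h2
  rw [← h1, ← h2, h]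

lemma e1_eq_ι2_inl (u : FZ) : e1 u = ι2 (SemidirectProduct.inl u) := by simp [ι2]

lemma e1_injective : Function.Injective e1 := by
  intro u v h
  rw [e1_eq_ι2_inl, e1_eq_ι2_inl] at h
  exact SemidirectProduct.inl_injective (ι2_injective h)

def B : F2 →* Multiplicative ℤ := FreeGroup.lift ![1, Multiplicative.ofAdd 1]

@[simp] lemma B_a : B a1 = 1 := by simp [B, a1, FreeGroup.lift_apply_of]
@[simp] lemma B_b : B b1 = Multiplicative.ofAdd 1 := by simp [B, b1, FreeGroup.lift_apply_of]

lemma B_e1 (u : FZ) : B (e1 u) = 1 := by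
  have h : B.comp e1 = 1 := by
    apply FreeGroup.ext_hom; intro i
    simp [MonoidHom.comp_apply]
  have := congrArg (fun (h : FZ →* Multiplicative ℤ) => h u) h
  simpa using this

lemma B_ι2 (m : M2) : B (ι2 m) = m.right := by
  have h : B.comp ι2 = SemidirectProduct.rightHom := by
    apply SemidirectProduct.hom_ext
    · apply FreeGroup.ext_hom; intro i
      simp [ι2, B_e1]
    · apply MonoidHom.ext_mint
      simp [ι2]
  have := congrArg (fun (h : M2 →* Multiplicative ℤ) => h m) h
  simpa using this

lemma mem_range_e1 {u : F2} (h : B u = 1) : ∃ p, e1 p = u := by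
  have hu : ι2 (j2 u) = u := by
    have := congrArg (fun (h : F2 →* F2) => h u) ι2_j2
    simpa using this
  have hr : (j2 u).right = 1 := by rw [← B_ι2 (j2 u), hu, h]
  refine ⟨(j2 u).left, ?_⟩
  have hl : SemidirectProduct.inl (j2 u).left = j2 u := by
    conv_rhs => rw [← SemidirectProduct.inl_left_mul_inr_right (j2 u)]
    rw [hr]; simp
  rw [e1_eq_ι2_inl, hl, hu]

def sw : F2 ≃* F2 := FreeGroup.freeGroupCongr (Equiv.swap (0 : Fin 2) 1)

@[simp] lemma sw_a : sw a1 = b1 := by simp [sw, a1, b1]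
@[simp] lemma sw_b : sw b1 = a1 := by simp [sw, a1, b1]

lemma sw_sw (u : F2) : sw (sw u) = u := by
  have h : (Equiv.swap (0:Fin 2) 1).trans (Equiv.swap (0:Fin 2) 1) = Equiv.refl _ :=
    Equiv.swap_swap _ _
  have h2 : (sw.trans sw) u = u := by
    rw [sw, FreeGroup.freeGroupCongr_trans, h, FreeGroup.freeGroupCongr_refl]; rfl
  exact h2

def e2 : FZ →* F2 := sw.toMonoidHom.comp e1

@[simp] lemma e2_of (j : ℤ) : e2 (FreeGroup.of j) = a1 ^ j * b1 * a1 ^ (-j) := by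
  simp [e2]

lemma e2_injective : Function.Injective e2 := by
  intro u v h
  exact e1_injective (sw.injective h)

def C : F2 →* Multiplicative ℤ := B.comp sw.toMonoidHom

@[simp] lemma C_a : C a1 = Multiplicative.ofAdd 1 := by simp [C]
@[simp] lemma C_b : C b1 = 1 := by simp [C]

lemma C_e2 (v : FZ) : C (e2 v) = 1 := by
  have : C (e2 v) = B (sw (sw (e1 v))) := rfl
  rw [this, sw_sw, B_e1]

lemma mem_range_e2 {v : F2} (h : C v = 1) : ∃ q, e2 q = v := by
  obtain ⟨p, hp⟩ := mem_range_e1 (u := sw v) h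
  refine ⟨p, ?_⟩
  have : e2 p = sw (e1 p) := rfl
  rw [this, hp, sw_sw]


lemma prod_hom_ext {M N P : Type*} [Monoid M] [Monoid N] [Monoid P] {f g : M × N →* P}
    (h1 : f.comp (MonoidHom.inl M N) = g.comp (MonoidHom.inl M N))
    (h2 : f.comp (MonoidHom.inr M N) = g.comp (MonoidHom.inr M N)) : f = g :=
  MonoidHom.ext fun p => by
    have q1 := congrArg (fun h : M →* P => h p.1) h1
    have q2 := congrArg (fun h : N →* P => h p.2) h2
    simp only [MonoidHom.comp_apply, MonoidHom.inl_apply, MonoidHom.inr_apply] at q1 q2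
    rw [← Prod.fst_mul_snd p, _root_.map_mul, _root_.map_mul, q1, q2]

def PA : MulAut FZ →* MulAut (FZ × FZ) where
  toFun σ := MulEquiv.prodCongr σ σ
  map_one' := MulEquiv.ext fun p => rfl
  map_mul' := fun σ τ => MulEquiv.ext fun p => rfl

def φP : Multiplicative ℤ →* MulAut (FZ × FZ) := PA.comp φ2

lemma φP_apply (g : Multiplicative ℤ) (p : FZ × FZ) :
    φP g p = ((σA ^ g.toAdd) p.1, (σA ^ g.toAdd) p.2) := rfl

abbrev MB := (FZ × FZ) ⋊[φP] Multiplicative ℤ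

def tpair : TT := (b1, a1)

def eP : FZ × FZ →* TT := e1.prodMap e2

@[simp] lemma eP_apply (p : FZ × FZ) : eP p = (e1 p.1, e2 p.2) := rfl

lemma tpair_zpow (k : ℤ) : tpair ^ k = (b1 ^ k, a1 ^ k) := rfl

lemma compatM : ∀ g : Multiplicative ℤ,
    eP.comp (φP g).toMonoidHom = (MulAut.conj ((zpowersHom TT tpair) g)).toMonoidHom.comp eP := by
  intro g
  apply prod_hom_ext
  · apply FreeGroup.ext_hom; intro i
    simp only [MonoidHom.comp_apply, MonoidHom.inl_apply, MulEquiv.coe_toMonoidHom,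
      φP_apply, σA_zpow_of, map_one, eP_apply, e1_of, MulAut.conj_apply,
      zpowersHom_apply, tpair_zpow, Prod.mk_mul_mk, Prod.inv_mk, _root_.map_one]
    refine Prod.ext ?_ ?_ <;> simp <;> group
  · apply FreeGroup.ext_hom; intro j
    simp only [MonoidHom.comp_apply, MonoidHom.inr_apply, MulEquiv.coe_toMonoidHom,
      φP_apply, σA_zpow_of, map_one, eP_apply, e2_of, MulAut.conj_apply,
      zpowersHom_apply, tpair_zpow, Prod.mk_mul_mk, Prod.inv_mk, _root_.map_one]
    refine Prod.ext ?_ ?_ <;> simp <;> group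

def ιM : MB →* TT := SemidirectProduct.lift eP (zpowersHom TT tpair) compatM

def stallingsSubgroup' : Subgroup TT := stallingsSubgroup

lemma memA : ((a1, 1) : TT) ∈ stallingsSubgroup' :=
  Subgroup.subset_closure (by left; rfl)
lemma memT : tpair ∈ stallingsSubgroup' :=
  Subgroup.subset_closure (by right; left; rfl)
lemma memY : (((1:F2), b1) : TT) ∈ stallingsSubgroup' :=
  Subgroup.subset_closure (by right; right; rfl)

lemma inl_left_mem (u : FZ) : ((e1 u, 1) : TT) ∈ stallingsSubgroup' := by
  induction u using FreeGroup.induction_on with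
  | C1 => rw [_root_.map_one]; exact one_mem stallingsSubgroup'
  | of i =>
      show ((e1 (FreeGroup.of i), 1) : TT) ∈ stallingsSubgroup'
      have he : ((e1 (FreeGroup.of i), 1) : TT) = tpair ^ i * (a1, 1) * tpair ^ (-i) := by
        rw [e1_of, tpair_zpow, tpair_zpow, Prod.mk_mul_mk, Prod.mk_mul_mk]
        refine Prod.ext rfl ?_
        simp
      rw [he]
      exact mul_mem (mul_mem (zpow_mem memT i) memA) (zpow_mem memT (-i))
  | inv_of i h =>
      show ((e1 (FreeGroup.of i)⁻¹, 1) : TT) ∈ stallingsSubgroup'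
      have heq : ((e1 (FreeGroup.of i)⁻¹, 1) : TT) = ((e1 (FreeGroup.of i), 1) : TT)⁻¹ := by
        rw [_root_.map_inv]; rfl
      rw [heq]; exact inv_mem h
  | mul u v hu hv =>
      have : ((e1 (u * v), 1) : TT) = (e1 u, 1) * (e1 v, 1) := by
        rw [_root_.map_mul]; rfl
      rw [this]; exact mul_mem hu hv

lemma inl_right_mem (v : FZ) : (((1:F2), e2 v) : TT) ∈ stallingsSubgroup' := by
  induction v using FreeGroup.induction_on with
  | C1 => rw [_root_.map_one]; exact one_mem stallingsSubgroup'
  | of j =>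
      show (((1:F2), e2 (FreeGroup.of j)) : TT) ∈ stallingsSubgroup'
      have he : (((1:F2), e2 (FreeGroup.of j)) : TT) = tpair ^ j * (1, b1) * tpair ^ (-j) := by
        rw [e2_of, tpair_zpow, tpair_zpow, Prod.mk_mul_mk, Prod.mk_mul_mk]
        refine Prod.ext ?_ rfl
        simp
      rw [he]
      exact mul_mem (mul_mem (zpow_mem memT j) memY) (zpow_mem memT (-j))
  | inv_of j h =>
      show (((1:F2), e2 (FreeGroup.of j)⁻¹) : TT) ∈ stallingsSubgroup'
      have heq : (((1:F2), e2 (FreeGroup.of j)⁻¹) : TT) = (((1:F2), e2 (FreeGroup.of j)) : TT)⁻¹ := by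
        rw [_root_.map_inv]; rfl
      rw [heq]; exact inv_mem h
  | mul u v hu hv =>
      have : (((1:F2), e2 (u * v)) : TT) = ((1:F2), e2 u) * ((1:F2), e2 v) := by
        rw [_root_.map_mul]; rfl
      rw [this]; exact mul_mem hu hv

lemma ιM_mem (m : MB) : ιM m ∈ stallingsSubgroup' := by
  rw [← SemidirectProduct.inl_left_mul_inr_right m, _root_.map_mul]
  refine mul_mem ?_ ?_
  · have : ιM (SemidirectProduct.inl m.left) = eP m.left := by simp [ιM]
    rw [this]
    have hd : eP m.left = (e1 m.left.1, 1) * (1, e2 m.left.2) := by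
      rw [eP_apply, Prod.mk_mul_mk, mul_one, one_mul]
    rw [hd]
    exact mul_mem (inl_left_mem _) (inl_right_mem _)
  · have : ιM (SemidirectProduct.inr m.right) = tpair ^ m.right.toAdd := by
      simp [ιM, zpowersHom_apply]
    rw [this]
    exact zpow_mem memT _

lemma range_ιM : ιM.range = stallingsSubgroup' := by
  apply le_antisymm
  · rintro x ⟨m, rfl⟩
    exact ιM_mem m
  · rw [stallingsSubgroup', stallingsSubgroup]
    rw [Subgroup.closure_le]
    rintro x (rfl | rfl | rfl)
    · exact ⟨SemidirectProduct.inl (FreeGroup.of 0, 1), by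
        simp [ιM]
        rfl⟩
    · exact ⟨SemidirectProduct.inr (Multiplicative.ofAdd 1), by
        simp [ιM, zpowersHom_apply]
        rfl⟩
    · exact ⟨SemidirectProduct.inl (1, FreeGroup.of 0), by
        simp [ιM]
        rfl⟩


lemma ιM_injective : Function.Injective ιM := by
  rw [injective_iff_map_eq_one]
  intro m hm
  rw [← SemidirectProduct.inl_left_mul_inr_right m, _root_.map_mul] at hm
  have h1 : ιM (SemidirectProduct.inl m.left) = eP m.left := by simp [ιM]
  have h2 : ιM (SemidirectProduct.inr m.right) = tpair ^ m.right.toAdd := by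
    simp [ιM, zpowersHom_apply]
  rw [h1, h2, eP_apply, tpair_zpow, Prod.mk_mul_mk, Prod.mk_eq_one] at hm
  obtain ⟨hm1, hm2⟩ := hm
  have hB := congrArg B hm1
  rw [_root_.map_mul, B_e1, _root_.map_zpow, B_b, one_mul, _root_.map_one B] at hB
  have hk : m.right.toAdd = 0 := by
    have h := congrArg (fun z : Multiplicative ℤ => z.toAdd) hB
    simp only [toAdd_zpow, toAdd_ofAdd, _root_.map_one, toAdd_one, smul_eq_mul, mul_one] at h
    exact h
  rw [hk, zpow_zero, mul_one] at hm1 hm2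
  have hu : m.left.1 = 1 := e1_injective (by rw [hm1, _root_.map_one])
  have hv : m.left.2 = 1 := e2_injective (by rw [hm2, _root_.map_one])
  have hr : m.right = 1 := by
    rw [← ofAdd_toAdd m.right, hk]; rfl
  rw [← SemidirectProduct.inl_left_mul_inr_right m, hr,
    show m.left = 1 from Prod.ext hu hv]
  simp

abbrev F3 := FreeGroup (Fin 3)

def xg : F3 := FreeGroup.of 0
def tg : F3 := FreeGroup.of 1
def yg : F3 := FreeGroup.of 2

def ρ : F3 →* TT := FreeGroup.lift ![(a1, 1), tpair, (1, b1)]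

@[simp] lemma ρ_x : ρ xg = (a1, 1) := by simp [ρ, xg, FreeGroup.lift_apply_of]
@[simp] lemma ρ_t : ρ tg = tpair := by simp [ρ, tg, FreeGroup.lift_apply_of]
@[simp] lemma ρ_y : ρ yg = ((1 : F2), b1) := by simp [ρ, yg, FreeGroup.lift_apply_of]

def ΦM : F3 →* MB := FreeGroup.lift
  ![SemidirectProduct.inl (FreeGroup.of (0:ℤ), 1),
    SemidirectProduct.inr (Multiplicative.ofAdd 1),
    SemidirectProduct.inl (1, FreeGroup.of (0:ℤ))]

lemma ιΦ : ιM.comp ΦM = ρ := by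
  apply FreeGroup.ext_hom
  intro i
  fin_cases i <;>
    simp [ιM, ΦM, ρ, FreeGroup.lift_apply_of, zpowersHom_apply, tpair] <;> rfl

def w (i : ℤ) : F3 := ⁅tg ^ i * xg * tg ^ (-i), yg⁆

def Ninf : Subgroup F3 := Subgroup.normalClosure (Set.range w)

def Nn (n : ℕ) : Subgroup F3 := Subgroup.normalClosure (w '' {i : ℤ | |i| ≤ (n:ℤ)})

lemma ρ_conj (i : ℤ) : ρ (tg ^ i * xg * tg ^ (-i)) = (b1 ^ i * a1 * b1 ^ (-i), 1) := by
  rw [_root_.map_mul, _root_.map_mul, _root_.map_zpow, _root_.map_zpow, ρ_t, ρ_x,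
    tpair_zpow, tpair_zpow, Prod.mk_mul_mk, Prod.mk_mul_mk]
  refine Prod.ext rfl ?_
  simp

lemma ρ_w (i : ℤ) : ρ (w i) = 1 := by
  rw [w, map_commutatorElement, ρ_conj, ρ_y]
  rw [commutatorElement_eq_one_iff_commute]
  show ((b1 ^ i * a1 * b1 ^ (-i), (1:F2)) : TT) * ((1:F2), b1)
      = ((1:F2), b1) * (b1 ^ i * a1 * b1 ^ (-i), (1:F2))
  rw [Prod.mk_mul_mk, Prod.mk_mul_mk, one_mul, mul_one, one_mul, mul_one]

lemma Ninf_le_ker : Ninf ≤ ρ.ker := by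
  apply Subgroup.normalClosure_le_normal
  rintro _ ⟨i, rfl⟩
  exact ρ_w i

instance Ninf_normal : Ninf.Normal := Subgroup.normalClosure_normal

abbrev QQ := F3 ⧸ Ninf

def mkQ : F3 →* QQ := QuotientGroup.mk' Ninf

def Xb (i : ℤ) : QQ := mkQ (tg ^ i * xg * tg ^ (-i))
def Yb (j : ℤ) : QQ := mkQ (tg ^ j * yg * tg ^ (-j))

lemma mkQ_eq_one {x : F3} (h : x ∈ Ninf) : mkQ x = 1 :=
  (QuotientGroup.eq_one_iff x).mpr h

lemma w_conj_mem (i j : ℤ) :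
    ⁅tg ^ i * xg * tg ^ (-i), tg ^ j * yg * tg ^ (-j)⁆ ∈ Ninf := by
  have key : ⁅tg ^ i * xg * tg ^ (-i), tg ^ j * yg * tg ^ (-j)⁆
      = tg ^ j * w (i - j) * (tg ^ j)⁻¹ := by
    rw [w, commutatorElement_def, commutatorElement_def]
    group
  rw [key]
  exact Subgroup.normalClosure_normal.conj_mem _ (Subgroup.subset_normalClosure (Set.mem_range_self (i - j))) _

lemma commXY (i j : ℤ) : Commute (Xb i) (Yb j) := by
  rw [← commutatorElement_eq_one_iff_commute]
  have h : ⁅Xb i, Yb j⁆ = mkQ ⁅tg ^ i * xg * tg ^ (-i), tg ^ j * yg * tg ^ (-j)⁆ :=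
    (map_commutatorElement mkQ _ _).symm
  rw [h]
  exact mkQ_eq_one (w_conj_mem i j)

lemma lift_commute {α β K : Type*} [Group K] (f : α → K) (g : β → K)
    (h : ∀ p q, Commute (f p) (g q)) (u : FreeGroup α) (v : FreeGroup β) :
    Commute (FreeGroup.lift f u) (FreeGroup.lift g v) := by
  have aux : ∀ (p : α) (v : FreeGroup β), Commute (f p) (FreeGroup.lift g v) := by
    intro p v
    induction v using FreeGroup.induction_on with
    | C1 => simpa using Commute.one_right (f p)
    | of q =>
        have : FreeGroup.lift g (FreeGroup.of q) = g q := FreeGroup.lift_apply_of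
        show Commute (f p) (FreeGroup.lift g (FreeGroup.of q))
        rw [this]; exact h p q
    | inv_of q hq =>
        show Commute (f p) (FreeGroup.lift g (FreeGroup.of q)⁻¹)
        rw [_root_.map_inv]
        exact (hq).inv_right
    | mul v1 v2 h1 h2 =>
        rw [_root_.map_mul]
        exact h1.mul_right h2
  induction u using FreeGroup.induction_on with
  | C1 => simpa using Commute.one_left (FreeGroup.lift g v)
  | of p =>
      show Commute (FreeGroup.lift f (FreeGroup.of p)) (FreeGroup.lift g v)
      rw [FreeGroup.lift_apply_of]
      exact aux p v
  | inv_of p hp =>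
      show Commute (FreeGroup.lift f (FreeGroup.of p)⁻¹) (FreeGroup.lift g v)
      rw [_root_.map_inv]
      exact (hp).inv_left
  | mul u1 u2 h1 h2 =>
      rw [_root_.map_mul]
      exact h1.mul_left h2

def ΨX : FZ →* QQ := FreeGroup.lift Xb
def ΨY : FZ →* QQ := FreeGroup.lift Yb

lemma commAll : ∀ u v, Commute (ΨX u) (ΨY v) := fun u v => lift_commute Xb Yb commXY u v

def Ψin : FZ × FZ →* QQ := ΨX.noncommCoprod ΨY commAll

lemma compatQ : ∀ g : Multiplicative ℤ,
    Ψin.comp (φP g).toMonoidHom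
      = (MulAut.conj ((zpowersHom QQ (mkQ tg)) g)).toMonoidHom.comp Ψin := by
  intro g
  apply prod_hom_ext
  · apply FreeGroup.ext_hom; intro i
    simp only [MonoidHom.comp_apply, MonoidHom.inl_apply, MulEquiv.coe_toMonoidHom,
      φP_apply, σA_zpow_of, _root_.map_one, MulAut.conj_apply, zpowersHom_apply,
      Ψin, MonoidHom.noncommCoprod_apply, ΨX, ΨY, FreeGroup.lift_apply_of, mul_one]
    have h2 : mkQ tg ^ g.toAdd * Xb i * (mkQ tg ^ g.toAdd)⁻¹
        = mkQ (tg ^ g.toAdd * (tg ^ i * xg * tg ^ (-i)) * (tg ^ g.toAdd)⁻¹) := by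
      rw [_root_.map_mul, _root_.map_mul, _root_.map_inv, _root_.map_zpow]; rfl
    rw [h2, Xb]
    congr 1
    group
  · apply FreeGroup.ext_hom; intro j
    simp only [MonoidHom.comp_apply, MonoidHom.inr_apply, MulEquiv.coe_toMonoidHom,
      φP_apply, σA_zpow_of, _root_.map_one, MulAut.conj_apply, zpowersHom_apply,
      Ψin, MonoidHom.noncommCoprod_apply, ΨX, ΨY, FreeGroup.lift_apply_of, one_mul]
    have h2 : mkQ tg ^ g.toAdd * Yb j * (mkQ tg ^ g.toAdd)⁻¹
        = mkQ (tg ^ g.toAdd * (tg ^ j * yg * tg ^ (-j)) * (tg ^ g.toAdd)⁻¹) := by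
      rw [_root_.map_mul, _root_.map_mul, _root_.map_inv, _root_.map_zpow]; rfl
    rw [h2, Yb]
    congr 1
    group

def Ψ : MB →* QQ := SemidirectProduct.lift Ψin (zpowersHom QQ (mkQ tg)) compatQ

lemma ΨΦ : Ψ.comp ΦM = mkQ := by
  apply FreeGroup.ext_hom
  intro i
  fin_cases i
  · show Ψ (ΦM xg) = mkQ xg
    have h1 : ΦM xg = SemidirectProduct.inl (FreeGroup.of (0:ℤ), 1) := by
      simp [ΦM, xg, FreeGroup.lift_apply_of]
    rw [h1]
    have h2 : Ψ (SemidirectProduct.inl (FreeGroup.of (0:ℤ), 1)) = Xb 0 := by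
      simp [Ψ, Ψin, MonoidHom.noncommCoprod_apply, ΨX, ΨY, FreeGroup.lift_apply_of]
    rw [h2, Xb]
    congr 1
  · show Ψ (ΦM tg) = mkQ tg
    have h1 : ΦM tg = SemidirectProduct.inr (Multiplicative.ofAdd 1) := by
      simp [ΦM, tg, FreeGroup.lift_apply_of]
    rw [h1]
    simp [Ψ, zpowersHom_apply]
  · show Ψ (ΦM yg) = mkQ yg
    have h1 : ΦM yg = SemidirectProduct.inl (1, FreeGroup.of (0:ℤ)) := by
      simp [ΦM, yg, FreeGroup.lift_apply_of]
    rw [h1]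
    have h2 : Ψ (SemidirectProduct.inl ((1 : FZ), FreeGroup.of (0:ℤ))) = Yb 0 := by
      simp [Ψ, Ψin, MonoidHom.noncommCoprod_apply, ΨX, ΨY, FreeGroup.lift_apply_of]
    rw [h2, Yb]
    congr 1

lemma ker_ρ_eq : ρ.ker = Ninf := by
  apply le_antisymm _ Ninf_le_ker
  intro x hx
  have h1 : ιM (ΦM x) = 1 := by
    have := congrArg (fun h : F3 →* TT => h x) ιΦ
    simp only [MonoidHom.comp_apply] at this
    rw [this]
    exact hx
  have h2 : ΦM x = 1 := ιM_injective (by rw [h1, _root_.map_one])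
  have h3 : mkQ x = 1 := by
    have := congrArg (fun h : F3 →* QQ => h x) ΨΦ
    simp only [MonoidHom.comp_apply] at this
    rw [← this, h2, _root_.map_one]
  exact (QuotientGroup.eq_one_iff x).mp h3


lemma range_ρ : ρ.range = stallingsSubgroup' := by
  apply le_antisymm
  · rintro x ⟨u, rfl⟩
    have h : ρ u = ιM (ΦM u) := by
      have := congrArg (fun h : F3 →* TT => h u) ιΦ
      simp only [MonoidHom.comp_apply] at this
      rw [this]
    rw [h]
    exact ιM_mem _
  · rw [stallingsSubgroup', stallingsSubgroup, Subgroup.closure_le]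
    rintro x (rfl | rfl | rfl)
    · exact ⟨xg, ρ_x⟩
    · exact ⟨tg, ρ_t⟩
    · exact ⟨yg, ρ_y⟩

instance Nn_normal (n : ℕ) : (Nn n).Normal := Subgroup.normalClosure_normal

lemma Nn_mono : Monotone Nn := by
  intro n m h
  apply Subgroup.normalClosure_mono
  apply Set.image_mono
  intro i hi
  simp only [Set.mem_setOf_eq] at hi ⊢
  exact hi.trans (by exact_mod_cast h)

lemma directed_Nn : Directed (· ≤ ·) Nn := Nn_mono.directed_le

lemma mem_Ninf_exists {r : F3} (hr : r ∈ Ninf) : ∃ n, r ∈ Nn n := by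
  have hnorm : (⨆ n, Nn n).Normal := by
    constructor
    intro x hx g
    obtain ⟨n, hn⟩ := (Subgroup.mem_iSup_of_directed directed_Nn).mp hx
    exact (Subgroup.mem_iSup_of_directed directed_Nn).mpr ⟨n, (Nn_normal n).conj_mem x hn g⟩
  have hle : Ninf ≤ ⨆ n, Nn n := by
    apply Subgroup.normalClosure_le_normal
    rintro _ ⟨i, rfl⟩
    apply Subgroup.mem_iSup_of_mem (i := i.natAbs)
    apply Subgroup.subset_normalClosure
    refine ⟨i, ?_, rfl⟩
    simp only [Set.mem_setOf_eq, Int.abs_eq_natAbs]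
    omega
  exact (Subgroup.mem_iSup_of_directed directed_Nn).mp (hle hr)

lemma finset_subset_Nn (R : Finset F3) :
    (∀ r ∈ R, r ∈ Ninf) → ∃ n, ∀ r ∈ R, r ∈ Nn n := by
  classical
  induction R using Finset.induction_on with
  | empty => intro _; exact ⟨0, by simp⟩
  | @insert x R hx ih =>
      intro h
      obtain ⟨n1, h1⟩ := mem_Ninf_exists (h x (Finset.mem_insert_self x R))
      obtain ⟨n2, h2⟩ := ih (fun r hr => h r (Finset.mem_insert_of_mem hr))
      refine ⟨max n1 n2, ?_⟩
      intro r hr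
      rcases Finset.mem_insert.mp hr with rfl | hr'
      · exact Nn_mono (le_max_left n1 n2) h1
      · exact Nn_mono (le_max_right n1 n2) (h2 r hr')

lemma swap_commute {α : Type*} [DecidableEq α] {a b c d : α}
    (h1 : a ≠ c) (h2 : a ≠ d) (h3 : b ≠ c) (h4 : b ≠ d) :
    Commute (Equiv.swap a b) (Equiv.swap c d) := by
  show _ * _ = _ * _
  ext x
  simp only [Equiv.Perm.mul_apply, Equiv.swap_apply_def]
  split_ifs <;> simp_all


def mww (n : ℕ) : ℕ := 2 * n + 4

instance mww_nz (n : ℕ) : NeZero (mww n) := ⟨by simp [mww]⟩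

def zpt (n : ℕ) (c : ℤ) : ZMod (mww n) := (c : ZMod (mww n))

lemma zpt_ne (n : ℕ) {c d : ℤ} (h1 : -(mww n : ℤ) < c - d) (h2 : c - d < 0) :
    zpt n c ≠ zpt n d := by
  intro he
  have h0 : ((c - d : ℤ) : ZMod (mww n)) = 0 := by
    push_cast
    rw [show ((c:ZMod (mww n)) = (d:ZMod (mww n))) from he]
    ring
  rw [ZMod.intCast_zmod_eq_zero_iff_dvd] at h0
  have h3 : ((mww n : ℕ) : ℤ) ∣ (d - c) := by
    have := h0.neg_right
    simpa using this
  have h4 := Int.le_of_dvd (by omega) h3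
  omega

def Xp (n : ℕ) : Equiv.Perm (ZMod (mww n)) := Equiv.swap (zpt n 0) (zpt n 1)
def Tp (n : ℕ) : Equiv.Perm (ZMod (mww n)) := Equiv.addRight 1
def Yp (n : ℕ) : Equiv.Perm (ZMod (mww n)) :=
  Equiv.swap (zpt n ((n:ℤ)+2)) (zpt n ((n:ℤ)+3))

def χ (n : ℕ) : F3 →* Equiv.Perm (ZMod (mww n)) := FreeGroup.lift ![Xp n, Tp n, Yp n]

@[simp] lemma χ_x (n : ℕ) : χ n xg = Xp n := by simp [χ, xg, FreeGroup.lift_apply_of]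
@[simp] lemma χ_t (n : ℕ) : χ n tg = Tp n := by simp [χ, tg, FreeGroup.lift_apply_of]
@[simp] lemma χ_y (n : ℕ) : χ n yg = Yp n := by simp [χ, yg, FreeGroup.lift_apply_of]

lemma Tp_zpow (n : ℕ) (k : ℤ) (x : ZMod (mww n)) : ((Tp n) ^ k) x = x + (k : ZMod (mww n)) := by
  induction k using Int.induction_on generalizing x with
  | zero => simp
  | succ j ih =>
      rw [zpow_add_one, Equiv.Perm.mul_apply]
      have : (Tp n) x = x + 1 := rfl
      rw [this, ih]
      push_cast
      ring
  | pred j ih =>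
      rw [zpow_sub_one, Equiv.Perm.mul_apply]
      have hinv : (Tp n)⁻¹ x = x - 1 := by
        rw [Equiv.Perm.inv_def, Equiv.symm_apply_eq]
        show x = (x - 1) + 1
        ring
      rw [hinv, ih]
      push_cast
      ring

lemma χ_conj (n : ℕ) (i : ℤ) :
    χ n (tg ^ i * xg * tg ^ (-i)) = Equiv.swap (zpt n i) (zpt n (i+1)) := by
  rw [_root_.map_mul, _root_.map_mul, _root_.map_zpow, _root_.map_zpow, χ_t, χ_x]
  have h1 : ((Tp n) ^ i) (zpt n 0) = zpt n i := by
    rw [Tp_zpow]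
    simp [zpt]
  have h2 : ((Tp n) ^ i) (zpt n 1) = zpt n (i+1) := by
    rw [Tp_zpow]
    simp [zpt]
    push_cast
    ring
  rw [← h1, ← h2, Equiv.swap_apply_apply, Xp]
  rw [zpow_neg]

lemma χ_w (n : ℕ) (i : ℤ) : χ n (w i) = ⁅Equiv.swap (zpt n i) (zpt n (i+1)), Yp n⁆ := by
  rw [w, map_commutatorElement, χ_conj, χ_y]

lemma χ_w_small (n : ℕ) {i : ℤ} (hi : |i| ≤ (n:ℤ)) : χ n (w i) = 1 := by
  rw [χ_w, commutatorElement_eq_one_iff_commute, Yp]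
  rw [abs_le] at hi
  apply swap_commute
  · exact zpt_ne n (by simp [mww]; omega) (by omega)
  · exact zpt_ne n (by simp [mww]; omega) (by omega)
  · exact zpt_ne n (by simp [mww]; omega) (by omega)
  · exact zpt_ne n (by simp [mww]; omega) (by omega)

lemma Nn_le_ker_χ (n : ℕ) : Nn n ≤ (χ n).ker := by
  apply Subgroup.normalClosure_le_normal
  rintro _ ⟨i, hi, rfl⟩
  exact χ_w_small n hi

lemma χ_w_big (n : ℕ) : χ n (w ((n:ℤ)+1)) ≠ 1 := by
  intro hone
  rw [χ_w] at hone
  have hz12 : zpt n ((n:ℤ)+1) ≠ zpt n ((n:ℤ)+2) := zpt_ne n (by simp [mww]; omega) (by omega)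
  have hz13 : zpt n ((n:ℤ)+1) ≠ zpt n ((n:ℤ)+3) := zpt_ne n (by simp [mww]; omega) (by omega)
  have hz23 : zpt n ((n:ℤ)+2) ≠ zpt n ((n:ℤ)+3) := zpt_ne n (by simp [mww]; omega) (by omega)
  rw [show ((n:ℤ)+1+1) = ((n:ℤ)+2) from by ring] at hone
  have happ := congrArg (fun (e : Equiv.Perm (ZMod (mww n))) => e (zpt n ((n:ℤ)+2))) hone
  simp only [commutatorElement_def, Equiv.Perm.mul_apply, Equiv.Perm.one_apply,
    Equiv.swap_inv, Yp] at happ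
  rw [Equiv.swap_apply_left] at happ
  rw [Equiv.swap_apply_of_ne_of_ne hz13.symm hz23.symm] at happ
  rw [Equiv.swap_apply_right] at happ
  rw [Equiv.swap_apply_right] at happ
  exact hz12 happ


lemma w_not_mem (n : ℕ) : w ((n:ℤ)+1) ∉ Nn n := fun h => χ_w_big n (Nn_le_ker_χ n h)

/-! ### the homomorphism f -/

def fS : TT →* Multiplicative ℤ := B.coprod ((invMonoidHom).comp C)

lemma fS_apply (u v : F2) : fS (u, v) = B u * (C v)⁻¹ := rfl

lemma fS_surjective : Function.Surjective fS := by
  intro z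
  refine ⟨(b1 ^ z.toAdd, 1), ?_⟩
  rw [fS_apply, _root_.map_zpow, B_b, _root_.map_one C, inv_one, mul_one, ← ofAdd_zsmul]
  simp

lemma fS_ιM (m : MB) : fS (ιM m) = 1 := by
  rw [← SemidirectProduct.inl_left_mul_inr_right m, _root_.map_mul, _root_.map_mul]
  have h1 : ιM (SemidirectProduct.inl m.left) = (e1 m.left.1, e2 m.left.2) := by simp [ιM]
  have h2 : ιM (SemidirectProduct.inr m.right) = tpair ^ m.right.toAdd := by
    simp [ιM, zpowersHom_apply]
  rw [h1, h2]
  have h3 : fS (e1 m.left.1, e2 m.left.2) = 1 := by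
    rw [fS_apply, B_e1, C_e2, inv_one, mul_one]
  have h4 : fS (tpair ^ m.right.toAdd) = 1 := by
    rw [_root_.map_zpow]
    have : fS tpair = 1 := by
      rw [tpair, fS_apply, B_b, C_a]
      simp
    rw [this, one_zpow]
  rw [h3, h4, one_mul]

lemma ker_fS : fS.ker = stallingsSubgroup' := by
  rw [← range_ιM]
  apply le_antisymm
  · rintro ⟨u, v⟩ hx
    rw [MonoidHom.mem_ker, fS_apply] at hx
    have hBC : B u = C v := by
      have := mul_inv_eq_one.mp hx
      exact this
    set k : ℤ := (B u).toAdd with hk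
    have hu : B (u * b1 ^ (-k)) = 1 := by
      rw [_root_.map_mul, _root_.map_zpow, B_b]
      rw [show Multiplicative.ofAdd (1:ℤ) ^ (-k) = (B u)⁻¹ by
        rw [← ofAdd_zsmul]
        simp [hk]]
      exact mul_inv_cancel (B u)
    have hv : C (v * a1 ^ (-k)) = 1 := by
      rw [_root_.map_mul, _root_.map_zpow, C_a]
      rw [show Multiplicative.ofAdd (1:ℤ) ^ (-k) = (C v)⁻¹ by
        rw [← ofAdd_zsmul, ← hBC]
        simp [hk]]
      exact mul_inv_cancel (C v)
    obtain ⟨p, hp⟩ := mem_range_e1 hu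
    obtain ⟨q, hq⟩ := mem_range_e2 hv
    refine ⟨SemidirectProduct.inl (p, q) * SemidirectProduct.inr (Multiplicative.ofAdd k), ?_⟩
    rw [_root_.map_mul]
    have h1 : ιM (SemidirectProduct.inl ((p : FZ), (q : FZ))) = (e1 p, e2 q) := by simp [ιM]
    have h2 : ιM (SemidirectProduct.inr (Multiplicative.ofAdd k)) = tpair ^ k := by
      simp [ιM, zpowersHom_apply]
    rw [h1, h2, hp, hq, tpair_zpow, Prod.mk_mul_mk, Prod.mk.injEq]
    constructor <;> group
  · rintro x ⟨m, rfl⟩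
    exact fS_ιM m

/-! ### Tietze: finite presentability transfers between surjections from f.g. free groups -/

lemma map_ncl_le {G H : Type*} [Group G] [Group H] (f : G →* H) (s : Set G) {x : G}
    (hx : x ∈ Subgroup.normalClosure s) : f x ∈ Subgroup.normalClosure (f '' s) := by
  have hN : ((Subgroup.normalClosure (f '' s)).comap f).Normal :=
    Subgroup.Normal.comap Subgroup.normalClosure_normal f
  have : Subgroup.normalClosure s ≤ (Subgroup.normalClosure (f '' s)).comap f := by
    apply Subgroup.normalClosure_le_normal
    intro r hr
    exact Subgroup.subset_normalClosure (Set.mem_image_of_mem f hr)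
  exact this hx

lemma key_gen {m : ℕ} (q : FreeGroup (Fin m) →* FreeGroup (Fin m))
    (N : Subgroup (FreeGroup (Fin m))) (hN : N.Normal)
    (hgen : ∀ i : Fin m, (FreeGroup.of i)⁻¹ * q (FreeGroup.of i) ∈ N) :
    ∀ x, x⁻¹ * q x ∈ N := by
  intro x
  induction x using FreeGroup.induction_on with
  | C1 => simpa using N.one_mem
  | of i =>
      show (FreeGroup.of i)⁻¹ * q (FreeGroup.of i) ∈ N
      exact hgen i
  | inv_of i hx =>
      show ((FreeGroup.of i)⁻¹)⁻¹ * q ((FreeGroup.of i)⁻¹) ∈ N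
      have heq : ((FreeGroup.of i)⁻¹)⁻¹ * q ((FreeGroup.of i)⁻¹)
          = (FreeGroup.of i * ((FreeGroup.of i)⁻¹ * q (FreeGroup.of i)) * (FreeGroup.of i)⁻¹)⁻¹ := by
        rw [_root_.map_inv q]
        group
      rw [heq]
      exact inv_mem (hN.conj_mem _ (hgen i) _)
  | mul x y hx hy =>
      have heq : (x*y)⁻¹ * q (x*y)
          = (y⁻¹ * (x⁻¹ * q x) * y) * (y⁻¹ * q y) := by
        rw [_root_.map_mul q]
        group
      rw [heq]
      refine mul_mem ?_ hy
      have := hN.conj_mem _ hx y⁻¹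
      simpa using this

lemma tietze {G : Type*} [Group G] {n m : ℕ}
    (π : FreeGroup (Fin n) →* G) (hπ : Function.Surjective π)
    (s : Finset (FreeGroup (Fin n))) (hs : Subgroup.normalClosure ↑s = π.ker)
    (ρ' : FreeGroup (Fin m) →* G) (hρ : Function.Surjective ρ') :
    ∃ R : Finset (FreeGroup (Fin m)), Subgroup.normalClosure ↑R = ρ'.ker := by
  classical
  choose hh hhspec using fun i : Fin n => hρ (π (FreeGroup.of i))
  choose kk kkspec using fun i : Fin m => hπ (ρ' (FreeGroup.of i))
  let h : FreeGroup (Fin n) →* FreeGroup (Fin m) := FreeGroup.lift hh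
  let k : FreeGroup (Fin m) →* FreeGroup (Fin n) := FreeGroup.lift kk
  have hρh : ∀ u, ρ' (h u) = π u := by
    intro u
    have hc : ρ'.comp h = π := by
      apply FreeGroup.ext_hom; intro i
      simp [h, FreeGroup.lift_apply_of, hhspec]
    have := congrArg (fun f : FreeGroup (Fin n) →* G => f u) hc
    simpa using this
  have hπk : ∀ u, π (k u) = ρ' u := by
    intro u
    have hc : π.comp k = ρ' := by
      apply FreeGroup.ext_hom; intro i
      simp [k, FreeGroup.lift_apply_of, kkspec]
    have := congrArg (fun f : FreeGroup (Fin m) →* G => f u) hc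
    simpa using this
  refine ⟨s.image h ∪ Finset.univ.image
      (fun i : Fin m => (FreeGroup.of i)⁻¹ * h (k (FreeGroup.of i))), ?_⟩
  set Rs : Set (FreeGroup (Fin m)) := ↑(s.image h ∪ Finset.univ.image
      (fun i : Fin m => (FreeGroup.of i)⁻¹ * h (k (FreeGroup.of i)))) with hRs
  set N : Subgroup (FreeGroup (Fin m)) := Subgroup.normalClosure Rs with hN
  have hNnormal : N.Normal := Subgroup.normalClosure_normal
  have hmemR : ∀ i : Fin m, (FreeGroup.of i)⁻¹ * h (k (FreeGroup.of i)) ∈ Rs := by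
    intro i
    rw [hRs]
    simp only [Finset.coe_union, Set.mem_union, Finset.mem_coe, Finset.mem_image,
      Finset.mem_univ, true_and]
    right
    exact ⟨i, rfl⟩
  have himgR : ∀ r ∈ s, h r ∈ Rs := by
    intro r hr
    rw [hRs]
    simp only [Finset.coe_union, Set.mem_union, Finset.mem_coe, Finset.mem_image,
      Finset.mem_univ, true_and]
    left
    exact ⟨r, hr, rfl⟩
  have key : ∀ x : FreeGroup (Fin m), x⁻¹ * h (k x) ∈ N :=
    key_gen (h.comp k) N hNnormal
      (fun i => Subgroup.subset_normalClosure (hmemR i))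
  apply le_antisymm
  · apply Subgroup.normalClosure_le_normal
    intro r hr
    rw [hRs] at hr
    simp only [Finset.coe_union, Set.mem_union, Finset.mem_coe, Finset.mem_image,
      Finset.mem_univ, true_and] at hr
    rw [SetLike.mem_coe, MonoidHom.mem_ker]
    rcases hr with ⟨r0, hr0, rfl⟩ | ⟨i, rfl⟩
    · have hr0k : r0 ∈ π.ker := by rw [← hs]; exact Subgroup.subset_normalClosure hr0
      rw [hρh]
      exact hr0k
    · rw [_root_.map_mul, _root_.map_inv, hρh, hπk]
      group
  · intro x hx
    have hkx : k x ∈ π.ker := by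
      rw [MonoidHom.mem_ker, hπk]
      exact hx
    rw [← hs] at hkx
    have h1 : h (k x) ∈ Subgroup.normalClosure (h '' ↑s) := map_ncl_le h _ hkx
    have h2 : h (k x) ∈ N := by
      refine Subgroup.normalClosure_mono ?_ h1
      rintro y ⟨r0, hr0, rfl⟩
      exact himgR r0 (Finset.mem_coe.mp hr0)
    have h3 := key x
    have hxeq : x = h (k x) * (x⁻¹ * h (k x))⁻¹ := by group
    rw [hxeq]
    exact mul_mem h2 (inv_mem h3)


/-! ### T is finitely presented -/

def π4 : FreeGroup (Fin 4) →* TT := FreeGroup.lift ![(a1,1),(b1,1),(1,a1),(1,b1)]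

@[simp] lemma π4_0 : π4 (FreeGroup.of 0) = ((a1,1) : TT) := by simp [π4, FreeGroup.lift_apply_of]
@[simp] lemma π4_1 : π4 (FreeGroup.of 1) = ((b1,1) : TT) := by simp [π4, FreeGroup.lift_apply_of]
@[simp] lemma π4_2 : π4 (FreeGroup.of 2) = (((1:F2),a1) : TT) := by simp [π4, FreeGroup.lift_apply_of]
@[simp] lemma π4_3 : π4 (FreeGroup.of 3) = (((1:F2),b1) : TT) := by simp [π4, FreeGroup.lift_apply_of]

lemma π4_surjective : Function.Surjective π4 := by
  have h1 : ∀ u : F2,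
      π4 (FreeGroup.lift ![FreeGroup.of (0 : Fin 4), FreeGroup.of 1] u) = (u, 1) := by
    intro u
    have hc : π4.comp (FreeGroup.lift ![FreeGroup.of (0:Fin 4), FreeGroup.of 1])
        = MonoidHom.inl F2 F2 := by
      apply FreeGroup.ext_hom; intro i
      fin_cases i <;> simp [FreeGroup.lift_apply_of, a1, b1]
    have := congrArg (fun f : F2 →* TT => f u) hc
    simpa using this
  have h2 : ∀ v : F2,
      π4 (FreeGroup.lift ![FreeGroup.of (2 : Fin 4), FreeGroup.of 3] v) = (1, v) := by
    intro v
    have hc : π4.comp (FreeGroup.lift ![FreeGroup.of (2:Fin 4), FreeGroup.of 3])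
        = MonoidHom.inr F2 F2 := by
      apply FreeGroup.ext_hom; intro i
      fin_cases i <;> simp [FreeGroup.lift_apply_of, a1, b1]
    have := congrArg (fun f : F2 →* TT => f v) hc
    simpa using this
  intro p
  refine ⟨FreeGroup.lift ![FreeGroup.of (0:Fin 4), FreeGroup.of 1] p.1
    * FreeGroup.lift ![FreeGroup.of (2:Fin 4), FreeGroup.of 3] p.2, ?_⟩
  rw [_root_.map_mul, h1 p.1, h2 p.2, Prod.fst_mul_snd]

lemma comm_cross (p q : F2) : Commute ((p, (1:F2)) : TT) (((1:F2), q) : TT) := by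
  show _ * _ = _ * _
  rw [Prod.mk_mul_mk, Prod.mk_mul_mk, one_mul, mul_one, one_mul, mul_one]

lemma T_fp : Group.IsFinitelyPresented' TT := by
  classical
  refine ⟨4, π4, π4_surjective,
    ({⁅FreeGroup.of (0 : Fin 4), FreeGroup.of (2 : Fin 4)⁆, ⁅FreeGroup.of (0 : Fin 4), FreeGroup.of (3 : Fin 4)⁆,
      ⁅FreeGroup.of (1 : Fin 4), FreeGroup.of (2 : Fin 4)⁆, ⁅FreeGroup.of (1 : Fin 4), FreeGroup.of (3 : Fin 4)⁆} :
      Finset (FreeGroup (Fin 4))), ?_⟩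
  set s4 : Finset (FreeGroup (Fin 4)) :=
    {⁅FreeGroup.of (0 : Fin 4), FreeGroup.of (2 : Fin 4)⁆, ⁅FreeGroup.of (0 : Fin 4), FreeGroup.of (3 : Fin 4)⁆,
      ⁅FreeGroup.of (1 : Fin 4), FreeGroup.of (2 : Fin 4)⁆, ⁅FreeGroup.of (1 : Fin 4), FreeGroup.of (3 : Fin 4)⁆} with hs4def
  have hs4 : (↑s4 : Set (FreeGroup (Fin 4))) =
      {⁅FreeGroup.of (0 : Fin 4), FreeGroup.of (2 : Fin 4)⁆, ⁅FreeGroup.of (0 : Fin 4), FreeGroup.of (3 : Fin 4)⁆,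
       ⁅FreeGroup.of (1 : Fin 4), FreeGroup.of (2 : Fin 4)⁆, ⁅FreeGroup.of (1 : Fin 4), FreeGroup.of (3 : Fin 4)⁆} := by
    simp [hs4def]
    try rfl
  apply le_antisymm
  · apply Subgroup.normalClosure_le_normal
    intro r hr
    rw [hs4] at hr
    rw [SetLike.mem_coe, MonoidHom.mem_ker]
    rcases hr with rfl | rfl | rfl | rfl <;>
      · rw [map_commutatorElement]
        simp only [π4_0, π4_1, π4_2, π4_3]
        exact commutatorElement_eq_one_iff_commute.mpr (comm_cross _ _)
  · set N4 : Subgroup (FreeGroup (Fin 4)) := Subgroup.normalClosure ↑s4 with hN4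
    haveI : N4.Normal := Subgroup.normalClosure_normal
    set mk4 : FreeGroup (Fin 4) →* FreeGroup (Fin 4) ⧸ N4 := QuotientGroup.mk' N4 with hmk4
    set ψ1 : F2 →* FreeGroup (Fin 4) ⧸ N4 :=
      FreeGroup.lift ![mk4 (FreeGroup.of 0), mk4 (FreeGroup.of 1)] with hψ1
    set ψ2 : F2 →* FreeGroup (Fin 4) ⧸ N4 :=
      FreeGroup.lift ![mk4 (FreeGroup.of 2), mk4 (FreeGroup.of 3)] with hψ2
    have hcomm : ∀ u v, Commute (ψ1 u) (ψ2 v) := by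
      apply lift_commute
      intro p q
      have hmem : ∀ (i j : Fin 4), ⁅FreeGroup.of i, FreeGroup.of j⁆ ∈ (↑s4 : Set _) →
          Commute (mk4 (FreeGroup.of i)) (mk4 (FreeGroup.of j)) := by
        intro i j hij
        rw [← commutatorElement_eq_one_iff_commute, ← map_commutatorElement]
        exact (QuotientGroup.eq_one_iff _).mpr (Subgroup.subset_normalClosure hij)
      fin_cases p <;> fin_cases q <;>
        · simp only [Matrix.cons_val_zero, Matrix.cons_val_one, Matrix.head_cons, Fin.isValue]
          apply hmem
          rw [hs4]
          simp
    set ψ : TT →* FreeGroup (Fin 4) ⧸ N4 := ψ1.noncommCoprod ψ2 hcomm with hψ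
    have hψπ : ∀ u, ψ (π4 u) = mk4 u := by
      intro u
      have hc : ψ.comp π4 = mk4 := by
        apply FreeGroup.ext_hom; intro i
        fin_cases i <;>
          · simp only [MonoidHom.comp_apply, π4_0, π4_1, π4_2, π4_3]
            simp [hψ, MonoidHom.noncommCoprod_apply, hψ1, hψ2, FreeGroup.lift_apply_of, a1, b1]
      have := congrArg (fun f : FreeGroup (Fin 4) →* _ => f u) hc
      simpa using this
    intro x hx
    have : mk4 x = 1 := by
      rw [← hψπ x]
      rw [MonoidHom.mem_ker] at hx
      rw [hx, _root_.map_one]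
    exact (QuotientGroup.eq_one_iff _).mp this

/-! ### final assembly -/

lemma ρ_mem (u : F3) : ρ u ∈ stallingsSubgroup' := by
  have : ρ u ∈ ρ.range := ⟨u, rfl⟩
  rwa [range_ρ] at this

def ρS : F3 →* ↥stallingsSubgroup' := ρ.codRestrict stallingsSubgroup' ρ_mem

lemma ρS_surjective : Function.Surjective ρS := by
  rintro ⟨x, hx⟩
  rw [← range_ρ] at hx
  obtain ⟨u, hu⟩ := hx
  exact ⟨u, Subtype.ext hu⟩

lemma ker_ρS : ρS.ker = ρ.ker := by
  ext u
  simp only [MonoidHom.mem_ker, ρS, MonoidHom.codRestrict_apply]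
  constructor
  · intro h
    have := congrArg (Subtype.val) h
    simpa using this
  · intro h
    exact Subtype.ext (by simpa using h)

lemma S_not_fp : ¬ Group.IsFinitelyPresented' ↥stallingsSubgroup' := by
  rintro ⟨n, π, hsurj, s, hker⟩
  obtain ⟨R, hR⟩ := tietze π hsurj s hker ρS ρS_surjective
  have hRsub : ∀ r ∈ R, r ∈ Ninf := by
    intro r hr
    have h1 : r ∈ ρS.ker := by
      rw [← hR]
      exact Subgroup.subset_normalClosure hr
    rwa [ker_ρS, ker_ρ_eq] at h1
  obtain ⟨nb, hnb⟩ := finset_subset_Nn R hRsub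
  have hle : ρS.ker ≤ Nn nb := by
    rw [← hR]
    exact Subgroup.normalClosure_le_normal (fun r hr => hnb r (Finset.mem_coe.mp hr))
  have hwmem : w ((nb:ℤ)+1) ∈ ρS.ker := by
    rw [ker_ρS, ker_ρ_eq]
    exact Subgroup.subset_normalClosure (Set.mem_range_self _)
  exact w_not_mem nb (hle hwmem)

lemma S_fg : Group.FG ↥stallingsSubgroup' := by
  rw [Group.fg_iff_subgroup_fg]
  rw [Subgroup.fg_iff]
  refine ⟨{(FreeGroup.of 0, 1), (FreeGroup.of 1, FreeGroup.of 0), (1, FreeGroup.of 1)}, ?_, ?_⟩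
  · rw [stallingsSubgroup', stallingsSubgroup]
  · exact (Set.finite_singleton _).insert _ |>.insert _

lemma stallings_normal : stallingsSubgroup'.Normal := by
  rw [← ker_fS]
  exact MonoidHom.normal_ker fS

end StallingsProof

theorem stallings_example :
    stallingsSubgroup.Normal ∧
    (∃ f : FreeGroup (Fin 2) × FreeGroup (Fin 2) →* Multiplicative ℤ,
      Function.Surjective f ∧ f.ker = stallingsSubgroup) ∧
    Group.IsFinitelyPresented' (FreeGroup (Fin 2) × FreeGroup (Fin 2)) ∧
    ¬ Group.IsFinitelyPresented' stallingsSubgroup ∧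
    ¬ (∀ H : Subgroup (FreeGroup (Fin 2) × FreeGroup (Fin 2)),
        Group.FG H → Group.IsFinitelyPresented' H) := by
  refine ⟨StallingsProof.stallings_normal, ⟨StallingsProof.fS, StallingsProof.fS_surjective,
    StallingsProof.ker_fS⟩, StallingsProof.T_fp, StallingsProof.S_not_fp, ?_⟩
  intro hall
  exact StallingsProof.S_not_fp (hall stallingsSubgroup StallingsProof.S_fg)
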